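/- arXiv:math/0306166 — 2 statements merged into one kernel-verified Lean document; each statement's English description precedes it below -/
import Mathlib

section
/- Let A and B be additive induced-hereditary graph properties such that A∘B is not the class of all graphs (hence neither A nor B is). Then dec(A∘B) ≥ dec(A) + dec(B). Consequently, any factorisation of an additive induced-hereditary property P, not the class of all graphs, as a product of additive induced-hereditary factors has at most dec(P) factors. -/
/-!  Common framework: finite simple graphs on finite subsets of `ℕ`,
graph properties, `(P₁,…,Pₙ)`-partitions, products of properties,
`P`-decompositions, strict graphs, decomposability numbers, generating
sets, *-joins of copies, and the respecting notions from the paper. -/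

/-- A finite simple graph on a finite vertex set of natural numbers. -/
structure FGraph where
  verts : Finset ℕ
  Adj : ℕ → ℕ → Prop
  symm : ∀ a b, Adj a b → Adj b a
  loopless : ∀ a, ¬Adj a a
  mem_of_adj : ∀ a b, Adj a b → a ∈ verts ∧ b ∈ verts

/-- The null graph `K₀` (no vertices). -/
def nullGraph : FGraph where
  verts := ∅
  Adj _ _ := False
  symm _ _ h := h.elim
  loopless _ h := h
  mem_of_adj _ _ h := h.elim

namespace FGraph

/-- The subgraph of `G` induced by the vertex set `U`. -/
def induce (G : FGraph) (U : Finset ℕ) : FGraph where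
  verts := G.verts ∩ U
  Adj a b := G.Adj a b ∧ a ∈ U ∧ b ∈ U
  symm a b h := ⟨G.symm a b h.1, h.2.2, h.2.1⟩
  loopless a h := G.loopless a h.1
  mem_of_adj a b h := ⟨Finset.mem_inter.2 ⟨(G.mem_of_adj a b h.1).1, h.2.1⟩,
    Finset.mem_inter.2 ⟨(G.mem_of_adj a b h.1).2, h.2.2⟩⟩

/-- `φ` is an isomorphism from `G` onto `H`. -/
def IsoVia (G H : FGraph) (φ : ℕ → ℕ) : Prop :=
  Set.BijOn φ (G.verts : Set ℕ) (H.verts : Set ℕ) ∧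
    ∀ a ∈ G.verts, ∀ b ∈ G.verts, (G.Adj a b ↔ H.Adj (φ a) (φ b))

/-- `G` and `H` are isomorphic. -/
def Iso (G H : FGraph) : Prop := ∃ φ, G.IsoVia H φ

/-- `H ≤ G` : `H` is isomorphic to an induced subgraph of `G`. -/
def Le (H G : FGraph) : Prop := ∃ U ⊆ G.verts, H.Iso (G.induce U)

end FGraph

/-- `K` is the disjoint union of the family `C` of graphs. -/
def IsDisjUnion {k : ℕ} (K : FGraph) (C : Fin k → FGraph) : Prop :=
  (∀ i j, i ≠ j → Disjoint (C i).verts (C j).verts) ∧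
  K.verts = Finset.univ.biUnion (fun j => (C j).verts) ∧
  ∀ a b, K.Adj a b ↔ ∃ j, (C j).Adj a b

/-- `kG₀` : the set of graphs that are disjoint unions of `k` copies of `G₀`. -/
def kCopies (k : ℕ) (G₀ : FGraph) : Set FGraph :=
  {K | ∃ C : Fin k → FGraph, (∀ j, (C j).Iso G₀) ∧ IsDisjUnion K C}

/-- The *-join `G₁ * ⋯ * Gₙ` of a family of graphs (with pairwise disjoint
vertex sets): all graphs on the union of the vertex sets inducing each `Gᵢ`,
so that only edges joining distinct `Gᵢ`'s may be added. -/
def StarJoin {n : ℕ} (Gs : Fin n → FGraph) : Set FGraph :=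
  {H | H.verts = Finset.univ.biUnion (fun i => (Gs i).verts) ∧
    ∀ i, ∀ a ∈ (Gs i).verts, ∀ b ∈ (Gs i).verts, (H.Adj a b ↔ (Gs i).Adj a b)}

/-- `G * K₁` : the graphs obtained from `G` by adding one new vertex joined
arbitrarily to `G`. -/
def joinOne (G : FGraph) : Set FGraph :=
  {H | ∃ v, v ∉ G.verts ∧ H.verts = insert v G.verts ∧
    ∀ a ∈ G.verts, ∀ b ∈ G.verts, (H.Adj a b ↔ G.Adj a b)}

/-- A graph property: a nonempty isomorphism-closed class of graphs (it
contains the null graph, which by convention belongs to every property, and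
some graph with at least one vertex). -/
def IsProperty (P : Set FGraph) : Prop :=
  nullGraph ∈ P ∧ (∃ G ∈ P, G.verts.Nonempty) ∧
    ∀ G H, FGraph.Iso G H → G ∈ P → H ∈ P

/-- `P` is induced-hereditary. -/
def IndHer (P : Set FGraph) : Prop := ∀ G H, G ∈ P → FGraph.Le H G → H ∈ P

/-- `P` is additive: closed under disjoint unions. -/
def Additive' (P : Set FGraph) : Prop :=
  ∀ G H K : FGraph, G ∈ P → H ∈ P → IsDisjUnion K ![G, H] → K ∈ P

/-- An additive induced-hereditary graph property. -/
def IsAIH (P : Set FGraph) : Prop := IsProperty P ∧ IndHer P ∧ Additive' P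

/-- A `(P₁,…,Pₙ)`-partition of `G` (parts may be empty). -/
def IsPartitionInto {n : ℕ} (Ps : Fin n → Set FGraph) (G : FGraph)
    (V : Fin n → Finset ℕ) : Prop :=
  (∀ i j, i ≠ j → Disjoint (V i) (V j)) ∧
  Finset.univ.biUnion V = G.verts ∧
  ∀ i, G.induce (V i) ∈ Ps i

/-- The product `P₁ ∘ ⋯ ∘ Pₙ` of properties. -/
def ProdProp {n : ℕ} (Ps : Fin n → Set FGraph) : Set FGraph :=
  {G | ∃ V : Fin n → Finset ℕ, IsPartitionInto Ps G V}

/-- A `P`-decomposition of `G` with parts `V` : the parts are nonempty and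
partition `V(G)`, and for every `k ≥ 1` every graph in
`kG[V₁] * ⋯ * kG[Vₙ]` belongs to `P`. -/
def IsDecomp (P : Set FGraph) (G : FGraph) {n : ℕ} (V : Fin n → Finset ℕ) : Prop :=
  (∀ i, (V i).Nonempty) ∧
  (∀ i j, i ≠ j → Disjoint (V i) (V j)) ∧
  Finset.univ.biUnion V = G.verts ∧
  ∀ k : ℕ, 0 < k → ∀ A : Fin n → FGraph,
    (∀ i, A i ∈ kCopies k (G.induce (V i))) →
    (∀ i j, i ≠ j → Disjoint (A i).verts (A j).verts) →
    ∀ H ∈ StarJoin A, H ∈ P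

/-- `dec_P(G)` : the maximum number of parts of a `P`-decomposition of `G`
(`0` if there is none). -/
noncomputable def decP (P : Set FGraph) (G : FGraph) : ℕ :=
  sSup {n | ∃ V : Fin n → Finset ℕ, IsDecomp P G V}

/-- `G` is `P`-strict : `G ∈ P` but some graph in `G * K₁` is not in `P`. -/
def Strict (P : Set FGraph) (G : FGraph) : Prop :=
  G ∈ P ∧ ∃ H ∈ joinOne G, H ∉ P

/-- `dec(P) = min { dec_P(G) : G ∈ S(P) }`. -/
noncomputable def decOf (P : Set FGraph) : ℕ :=
  sInf (decP P '' {G | Strict P G})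

/-- `dec_P(𝒢) = min { dec_P(G) : G ∈ 𝒢 }`. -/
noncomputable def decSet (P 𝒢 : Set FGraph) : ℕ := sInf (decP P '' 𝒢)

/-- `⟨𝒢⟩` : the induced-hereditary property generated by `𝒢`. -/
def gen (𝒢 : Set FGraph) : Set FGraph := {G | ∃ H ∈ 𝒢, FGraph.Le G H}

/-- `𝒢` is a generating set for `P`. -/
def Generates (𝒢 P : Set FGraph) : Prop := gen 𝒢 = P

/-- `G` is uniquely `P`-decomposable: it has exactly one `P`-decomposition
(as an unordered partition) with `dec_P(G)` parts. -/
def UniquelyDecomposable (P : Set FGraph) (G : FGraph) : Prop :=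
  (∃ V : Fin (decP P G) → Finset ℕ, IsDecomp P G V) ∧
  ∀ V W : Fin (decP P G) → Finset ℕ, IsDecomp P G V → IsDecomp P G W →
    ∃ σ : Equiv.Perm (Fin (decP P G)), ∀ i, W i = V (σ i)

/-- Data exhibiting `Gstar` as a member of `s ⊛ G` : `s` pairwise disjoint
copies of `G` (given by isomorphisms) whose *-join contains `Gstar`. -/
structure CopyJoin (G : FGraph) (s : ℕ) (Gstar : FGraph) where
  copies : Fin s → FGraph
  maps : Fin s → ℕ → ℕ
  iso : ∀ k, G.IsoVia (copies k) (maps k)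
  disj : ∀ k l, k ≠ l → Disjoint (copies k).verts (copies l).verts
  mem : Gstar ∈ StarJoin copies

/-- `Gstar ∈ s ⊛ G` respects `d₀ = (U₁,…,Uₘ)` : every added edge between two
different copies of `G` meets (copies of) two different `Uⱼ`'s, i.e. there is
no edge between the copies of the same `Uⱼ` in two different copies of `G`. -/
def CopyJoin.RespectsJoin {G : FGraph} {s : ℕ} {Gstar : FGraph}
    (cj : CopyJoin G s Gstar) {m : ℕ} (U : Fin m → Finset ℕ) : Prop :=
  ∀ k l : Fin s, k ≠ l → ∀ j : Fin m, ∀ a ∈ (U j).image (cj.maps k),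
    ∀ b ∈ (U j).image (cj.maps l), ¬Gstar.Adj a b

/-- A partition `V` of `Gstar ∈ s ⊛ G` respects `d₀ = (U₁,…,Uₘ)` uniformly:
for each part `Vᵢ` there is a single `Uⱼ` such that in every copy `Gᵏ`,
`Vᵢ ∩ V(Gᵏ)` is contained in the copy of `Uⱼ`. -/
def CopyJoin.RespectsUniformly {G : FGraph} {s : ℕ} {Gstar : FGraph}
    (cj : CopyJoin G s Gstar) {n m : ℕ}
    (V : Fin n → Finset ℕ) (U : Fin m → Finset ℕ) : Prop :=
  ∀ i, ∃ j, ∀ k, V i ∩ (cj.copies k).verts ⊆ (U j).image (cj.maps k)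

/-- An irreducible additive induced-hereditary property: one that is not the
product of two additive induced-hereditary properties. -/
def IrredProp (P : Set FGraph) : Prop :=
  IsAIH P ∧ ¬∃ Q R : Set FGraph, IsAIH Q ∧ IsAIH R ∧ P = ProdProp ![Q, R]

namespace FGraph

theorem ext' {G H : FGraph} (hv : G.verts = H.verts) (ha : G.Adj = H.Adj) : G = H := by
  cases G; cases H; cases hv; cases ha; rfl

theorem adj_iff_ext {G H : FGraph} (hv : G.verts = H.verts)
    (ha : ∀ a ∈ G.verts, ∀ b ∈ G.verts, (G.Adj a b ↔ H.Adj a b)) : G = H := by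
  refine ext' hv ?_
  funext a b
  refine propext ⟨fun h => ?_, fun h => ?_⟩
  · exact (ha a (G.mem_of_adj a b h).1 b (G.mem_of_adj a b h).2).1 h
  · have := H.mem_of_adj a b h
    rw [← hv] at this
    exact (ha a this.1 b this.2).2 h

@[simp] theorem induce_verts (G : FGraph) (U : Finset ℕ) :
    (G.induce U).verts = G.verts ∩ U := rfl

theorem induce_induce (G : FGraph) (S T : Finset ℕ) :
    (G.induce S).induce T = G.induce (S ∩ T) := by
  refine ext' ?_ ?_
  · simp [Finset.inter_assoc]
  · funext a b
    refine propext ?_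
    simp only [induce, Finset.mem_inter]
    tauto

theorem induce_self (G : FGraph) : G.induce G.verts = G := by
  refine ext' (by simp) ?_
  funext a b
  refine propext ⟨fun h => h.1, fun h => ⟨h, (G.mem_of_adj a b h).1, (G.mem_of_adj a b h).2⟩⟩

theorem induce_eq_of_subset (G : FGraph) {U V : Finset ℕ} (h : U ⊆ V) :
    (G.induce V).induce U = G.induce U := by
  rw [induce_induce, Finset.inter_eq_right.mpr h]

theorem iso_refl (G : FGraph) : G.Iso G :=
  ⟨id, Set.bijOn_id _, fun _ _ _ _ => Iff.rfl⟩

theorem iso_trans {G H K : FGraph} (h1 : G.Iso H) (h2 : H.Iso K) : G.Iso K := by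
  obtain ⟨φ, hφ, hφa⟩ := h1
  obtain ⟨ψ, hψ, hψa⟩ := h2
  refine ⟨ψ ∘ φ, hψ.comp hφ, fun a ha b hb => ?_⟩
  exact (hφa a ha b hb).trans (hψa _ (hφ.mapsTo ha) _ (hφ.mapsTo hb))

end FGraph

/-- Any graph with empty vertex set belongs to any property. -/
theorem empty_mem {P : Set FGraph} (hP : IsProperty P) {G : FGraph} (h : G.verts = ∅) :
    G ∈ P := by
  refine hP.2.2 nullGraph G ⟨id, ?_, ?_⟩ hP.1
  · rw [show (nullGraph.verts : Set ℕ) = ∅ by simp [nullGraph],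
      show (G.verts : Set ℕ) = ∅ by simp [h]]
    exact Set.bijOn_empty id
  · intro a ha; simp [nullGraph] at ha

/-- Induced subgraphs of members belong to an induced-hereditary property. -/
theorem induce_mem {P : Set FGraph} (hP : IndHer P) {G : FGraph} (hG : G ∈ P)
    (U : Finset ℕ) : G.induce U ∈ P := by
  refine hP G _ hG ⟨U ∩ G.verts, Finset.inter_subset_right, ?_⟩
  have : G.induce (U ∩ G.verts) = G.induce U := by
    refine FGraph.adj_iff_ext ?_ ?_
    · simp [Finset.inter_comm, Finset.inter_assoc]
    · intro a ha b hb
      simp only [FGraph.induce]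
      simp only [Finset.mem_inter]
      constructor
      · rintro ⟨h1, h2, h3⟩; exact ⟨h1, h2.1, h3.1⟩
      · rintro ⟨h1, h2, h3⟩
        exact ⟨h1, ⟨h2, (G.mem_of_adj a b h1).1⟩, ⟨h3, (G.mem_of_adj a b h1).2⟩⟩
  rw [this]
  exact FGraph.iso_refl _
/-- Closure under isomorphism, from the target side. -/
theorem mem_of_iso {P : Set FGraph} (hP : IsProperty P) {G H : FGraph}
    (hG : G ∈ P) (h : G.Iso H) : H ∈ P := hP.2.2 G H h hG

theorem mem_of_iso' {P : Set FGraph} (hP : IndHer P) {G H : FGraph}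
    (hG : G ∈ P) (h : H.Iso G) : H ∈ P := by
  refine hP G H hG ⟨G.verts, le_rfl, ?_⟩
  rw [FGraph.induce_self]; exact h

/-- Any one-vertex graph belongs to any induced-hereditary property. -/
theorem single_mem {P : Set FGraph} (hP : IsProperty P) (hher : IndHer P)
    {H : FGraph} {v : ℕ} (h : H.verts = {v}) : H ∈ P := by
  obtain ⟨G₀, hG₀, w, hw⟩ := hP.2.1
  have h1 : G₀.induce {w} ∈ P := induce_mem hher hG₀ _
  refine mem_of_iso hP h1 ⟨fun _ => v, ?_, ?_⟩
  · constructor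
    · intro x hx; simp [h]
    · constructor
      · intro x hx y hy _
        simp only [FGraph.induce_verts, Finset.coe_inter, Set.mem_inter_iff,
          Finset.mem_coe, Finset.mem_singleton] at hx hy
        rw [hx.2, hy.2]
      · intro y hy
        simp only [h, Finset.coe_singleton, Set.mem_singleton_iff] at hy
        exact ⟨w, by simp [hw], hy.symm⟩
  · intro a ha b hb
    simp only [FGraph.induce_verts, Finset.coe_inter, Finset.mem_inter,
      Finset.mem_singleton] at ha hb
    constructor
    · intro hadj
      have := hadj.1
      rw [ha.2, hb.2] at this
      exact absurd this (G₀.loopless w)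
    · intro hadj
      exact absurd hadj (H.loopless v)

/-- If `P ≠ univ` then there is a `P`-strict graph. -/
theorem strict_exists {P : Set FGraph} (hP : IsProperty P) (hher : IndHer P)
    (hne : P ≠ Set.univ) : ∃ G, Strict P G := by
  obtain ⟨H₀, hH₀⟩ := (Set.ne_univ_iff_exists_notMem P).1 hne
  set S : Set ℕ := {n | ∃ H, H ∉ P ∧ H.verts.card = n} with hS
  have hSne : S.Nonempty := ⟨H₀.verts.card, H₀, hH₀, rfl⟩
  obtain ⟨H, hHP, hHcard⟩ := Nat.sInf_mem hSne
  have hpos : 0 < H.verts.card := by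
    rcases Nat.eq_zero_or_pos H.verts.card with h0 | h
    · exact absurd (empty_mem hP (Finset.card_eq_zero.1 h0)) hHP
    · exact h
  obtain ⟨v, hv⟩ := Finset.card_pos.1 hpos
  set G := H.induce (H.verts.erase v) with hG
  have hGverts : G.verts = H.verts.erase v := by
    simp [hG, Finset.inter_eq_right.mpr (Finset.erase_subset v H.verts)]
  have hGP : G ∈ P := by
    by_contra hGnot
    have : G.verts.card ∈ S := ⟨G, hGnot, rfl⟩
    have hle := Nat.sInf_le this
    rw [hGverts, Finset.card_erase_of_mem hv, ← hHcard] at hle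
    omega
  refine ⟨G, hGP, H, ⟨v, ?_, ?_, ?_⟩, hHP⟩
  · rw [hGverts]; simp
  · rw [hGverts, Finset.insert_erase hv]
  · intro a ha b hb
    rw [hGverts] at ha hb
    simp only [hG, FGraph.induce]
    constructor
    · intro hadj; exact ⟨hadj, ha, hb⟩
    · intro hadj; exact hadj.1

/-- Strict graphs have nonempty vertex sets. -/
theorem strict_nonempty {P : Set FGraph} (hP : IsProperty P) (hher : IndHer P)
    {G : FGraph} (h : Strict P G) : G.verts.Nonempty := by
  rcases G.verts.eq_empty_or_nonempty with he | hne
  · obtain ⟨-, H, ⟨v, hv, hverts, -⟩, hHP⟩ := h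
    rw [he] at hverts
    exact absurd (single_mem hP hher (by simpa using hverts)) hHP
  · exact hne
theorem biUnion_fin_two (V : Fin 2 → Finset ℕ) :
    Finset.univ.biUnion V = V 0 ∪ V 1 := by
  ext x
  simp [Finset.mem_biUnion, Fin.exists_fin_two]

/-- A disjoint union of `k` copies of a member of an AIH property is a member. -/
theorem kCopies_mem {P : Set FGraph} (hP : IsAIH P) {G : FGraph} (hG : G ∈ P) :
    ∀ k (K : FGraph), K ∈ kCopies k G → K ∈ P := by
  intro k
  induction k with
  | zero =>
    intro K hK
    obtain ⟨C, -, -, hverts, -⟩ := hK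
    exact empty_mem hP.1 (by simpa using hverts)
  | succ k ih =>
    intro K hK
    obtain ⟨C, hiso, hdisj, hverts, hadj⟩ := hK
    set S : Finset ℕ := Finset.univ.biUnion (fun j : Fin k => (C j.castSucc).verts) with hSdef
    have hSsub : S ⊆ K.verts := by
      intro x hx
      rw [hverts]
      simp only [hSdef, Finset.mem_biUnion, Finset.mem_univ, true_and] at hx ⊢
      obtain ⟨j, hj⟩ := hx
      exact ⟨j.castSucc, hj⟩
    have hlast_disj : ∀ j : Fin k, Disjoint (C j.castSucc).verts (C (Fin.last k)).verts := by
      intro j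
      exact hdisj _ _ (by simp [Fin.ext_iff]; omega)
    have hK' : K.induce S ∈ kCopies k G := by
      refine ⟨fun j => C j.castSucc, fun j => hiso _, fun i j hij => hdisj _ _ (by
        simp [Fin.ext_iff] at hij ⊢; omega), ?_, ?_⟩
      · simp only [FGraph.induce_verts]
        rw [Finset.inter_eq_right.mpr hSsub]
      · intro a b
        simp only [FGraph.induce]
        constructor
        · rintro ⟨hadj', haS, hbS⟩
          obtain ⟨j, hj⟩ := (hadj a b).1 hadj'
          simp only [hSdef, Finset.mem_biUnion, Finset.mem_univ, true_and] at haS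
          obtain ⟨j₀, hj₀⟩ := haS
          rcases Fin.eq_castSucc_or_eq_last j with ⟨j', rfl⟩ | rfl
          · exact ⟨j', by
              have hmem := (C j'.castSucc).mem_of_adj a b hj
              exact hj⟩
          · exact absurd ((C (Fin.last k)).mem_of_adj a b hj).1
              (Finset.disjoint_left.1 (hlast_disj j₀) hj₀)
        · rintro ⟨j, hj⟩
          have hm := (C j.castSucc).mem_of_adj a b hj
          refine ⟨(hadj a b).2 ⟨j.castSucc, hj⟩, ?_, ?_⟩ <;>
            · simp only [hSdef, Finset.mem_biUnion, Finset.mem_univ, true_and]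
              exact ⟨j, by tauto⟩
    have hKi : K.induce S ∈ P := ih _ hK'
    have hClast : C (Fin.last k) ∈ P := mem_of_iso' hP.2.1 hG (hiso _)
    refine hP.2.2 (K.induce S) (C (Fin.last k)) K hKi hClast ?_
    have hvertsS : (K.induce S).verts = S := by
      simp [Finset.inter_eq_right.mpr hSsub]
    have hdisj2 : Disjoint (K.induce S).verts (C (Fin.last k)).verts := by
      rw [hvertsS, hSdef]
      exact Finset.disjoint_biUnion_left _ _ _ |>.2 fun j _ => hlast_disj j
    refine ⟨?_, ?_, ?_⟩
    · intro i j hij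
      fin_cases i <;> fin_cases j
      · simp at hij
      · simpa using hdisj2
      · simpa using hdisj2.symm
      · simp at hij
    · rw [biUnion_fin_two]
      simp only [Matrix.cons_val_zero, Matrix.cons_val_one, Matrix.head_cons]
      rw [hvertsS, hverts]
      ext x
      simp only [Finset.mem_biUnion, Finset.mem_univ, true_and, Finset.mem_union, hSdef]
      constructor
      · rintro ⟨j, hj⟩
        rcases Fin.eq_castSucc_or_eq_last j with ⟨j', rfl⟩ | rfl
        · exact Or.inl ⟨j', hj⟩
        · exact Or.inr hj
      · rintro (⟨j, hj⟩ | hj)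
        · exact ⟨j.castSucc, hj⟩
        · exact ⟨Fin.last k, hj⟩
    · intro a b
      rw [hadj a b, Fin.exists_fin_two]
      simp only [Matrix.cons_val_zero, Matrix.cons_val_one, Matrix.head_cons]
      constructor
      · rintro ⟨j, hj⟩
        rcases Fin.eq_castSucc_or_eq_last j with ⟨j', rfl⟩ | rfl
        · refine Or.inl ⟨(hadj a b).2 ⟨j'.castSucc, hj⟩, ?_, ?_⟩ <;>
            · simp only [hSdef, Finset.mem_biUnion, Finset.mem_univ, true_and]
              exact ⟨j', by have := (C j'.castSucc).mem_of_adj a b hj; tauto⟩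
        · exact Or.inr hj
      · rintro (⟨hadj', -, -⟩ | hj)
        · exact (hadj a b).1 hadj'
        · exact ⟨Fin.last k, hj⟩
theorem decompSet_bdd (P : Set FGraph) (G : FGraph) :
    BddAbove {n | ∃ V : Fin n → Finset ℕ, IsDecomp P G V} := by
  refine ⟨G.verts.card, fun n hn => ?_⟩
  obtain ⟨V, hV1, hV2, hV3, -⟩ := hn
  have : (Finset.univ : Finset (Fin n)).card ≤ G.verts.card := by
    refine Finset.card_le_card_of_injOn (fun i => (hV1 i).choose) ?_ ?_
    · intro i _
      have h1 : (hV1 i).choose ∈ V i := (hV1 i).choose_spec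
      rw [← hV3]
      exact Finset.mem_biUnion.2 ⟨i, Finset.mem_univ i, h1⟩
    · intro i _ j _ hij
      by_contra hne
      simp only at hij
      refine Finset.disjoint_left.1 (hV2 i j hne) (hV1 i).choose_spec ?_
      rw [hij]
      exact (hV1 j).choose_spec
  simpa using this

theorem le_decP {P : Set FGraph} {G : FGraph} {n : ℕ} {V : Fin n → Finset ℕ}
    (h : IsDecomp P G V) : n ≤ decP P G :=
  le_csSup (decompSet_bdd P G) ⟨V, h⟩

/-- The trivial one-part decomposition. -/
theorem single_decomp {P : Set FGraph} (hP : IsAIH P) {G : FGraph} (hG : G ∈ P)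
    (hne : G.verts.Nonempty) : IsDecomp P G (fun _ : Fin 1 => G.verts) := by
  refine ⟨fun _ => hne, fun i j hij => absurd (Subsingleton.elim i j) hij, ?_, ?_⟩
  · ext x; simp
  · intro k hk A hcop hdisj H hH
    have h0 : A 0 ∈ kCopies k G := by
      have := hcop 0
      rwa [FGraph.induce_self] at this
    have hHA : H = A 0 := by
      have hverts : H.verts = (A 0).verts := by
        rw [hH.1]; ext x; simp [Fin.exists_fin_one]
      refine FGraph.adj_iff_ext hverts ?_
      intro a ha b hb
      rw [hverts] at ha hb
      exact hH.2 0 a ha b hb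
    rw [hHA]
    exact kCopies_mem hP hG k _ h0

/-- Every `P`-strict graph has a decomposition realising `decP`. -/
theorem decP_decomp {P : Set FGraph} (hP : IsAIH P) {G : FGraph} (hG : G ∈ P)
    (hne : G.verts.Nonempty) : ∃ V : Fin (decP P G) → Finset ℕ, IsDecomp P G V := by
  have hmem : decP P G ∈ {n | ∃ V : Fin n → Finset ℕ, IsDecomp P G V} :=
    Nat.sSup_mem ⟨1, _, single_decomp hP hG hne⟩ (decompSet_bdd P G)
  exact hmem

theorem decOf_le_decP {P : Set FGraph} {G : FGraph} (h : Strict P G) :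
    decOf P ≤ decP P G :=
  Nat.sInf_le ⟨G, h, rfl⟩

theorem decOf_pos {P : Set FGraph} (hP : IsAIH P) (hne : P ≠ Set.univ) :
    1 ≤ decOf P := by
  obtain ⟨G₀, hG₀⟩ := strict_exists hP.1 hP.2.1 hne
  refine le_csInf ⟨_, G₀, hG₀, rfl⟩ ?_
  rintro b ⟨G, hG, rfl⟩
  exact le_decP (single_decomp hP hG.1 (strict_nonempty hP.1 hP.2.1 hG))
theorem part_subset {n : ℕ} {Ps : Fin n → Set FGraph} {G : FGraph}
    {V : Fin n → Finset ℕ} (h : IsPartitionInto Ps G V) (i : Fin n) :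
    V i ⊆ G.verts := by
  intro x hx
  rw [← h.2.1]
  exact Finset.mem_biUnion.2 ⟨i, Finset.mem_univ i, hx⟩

/-- A member of a factor belongs to the product. -/
theorem mem_prodProp_of_mem {n : ℕ} {Qs : Fin n → Set FGraph}
    (hprop : ∀ i, IsProperty (Qs i)) {i₀ : Fin n} {G : FGraph} (hG : G ∈ Qs i₀) :
    G ∈ ProdProp Qs := by
  refine ⟨fun j => if j = i₀ then G.verts else ∅, ?_, ?_, ?_⟩
  · intro i j hij
    dsimp only
    rcases eq_or_ne i i₀ with rfl | hi
    · rw [if_neg (Ne.symm hij)]; simp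
    · rw [if_neg hi]; simp
  · ext x
    simp only [Finset.mem_biUnion, Finset.mem_univ, true_and]
    constructor
    · rintro ⟨j, hj⟩
      split at hj
      · exact hj
      · simp at hj
    · intro hx
      exact ⟨i₀, by simp [hx]⟩
  · intro i
    dsimp only
    rcases eq_or_ne i i₀ with rfl | hi
    · rw [if_pos rfl, FGraph.induce_self]; exact hG
    · rw [if_neg hi]
      exact empty_mem (hprop i) (by simp)

theorem prodProp_iso_closed {n : ℕ} {Qs : Fin n → Set FGraph}
    (hprop : ∀ i, IsProperty (Qs i)) :
    ∀ G H, FGraph.Iso G H → G ∈ ProdProp Qs → H ∈ ProdProp Qs := by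
  rintro G H ⟨φ, hbij, hadj⟩ ⟨V, hVd, hVu, hVm⟩
  have hVsub : ∀ i, V i ⊆ G.verts := part_subset ⟨hVd, hVu, hVm⟩
  refine ⟨fun i => (V i).image φ, ?_, ?_, ?_⟩
  · intro i j hij
    rw [Finset.disjoint_left]
    rintro x hx hx'
    obtain ⟨a, ha, rfl⟩ := Finset.mem_image.1 hx
    obtain ⟨b, hb, hab⟩ := Finset.mem_image.1 hx'
    have : b = a := hbij.2.1 (hVsub j hb) (hVsub i ha) hab
    subst this
    exact Finset.disjoint_left.1 (hVd i j hij) ha hb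
  · ext y
    simp only [Finset.mem_biUnion, Finset.mem_univ, true_and, Finset.mem_image]
    constructor
    · rintro ⟨i, a, ha, rfl⟩
      exact hbij.1 (hVsub i ha)
    · intro hy
      obtain ⟨a, ha, rfl⟩ := hbij.2.2 hy
      have ha' : a ∈ G.verts := ha
      rw [← hVu] at ha'
      obtain ⟨i, -, hai⟩ := Finset.mem_biUnion.1 ha'
      exact ⟨i, a, hai, rfl⟩
  · intro i
    refine (hprop i).2.2 (G.induce (V i)) _ ⟨φ, ?_, ?_⟩ (hVm i)
    · have h1 : (G.induce (V i)).verts = V i := by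
        simp [Finset.inter_eq_right.mpr (hVsub i)]
      have h2 : (H.induce ((V i).image φ)).verts = (V i).image φ := by
        simp only [FGraph.induce_verts]
        rw [Finset.inter_eq_right]
        intro y hy
        obtain ⟨a, ha, rfl⟩ := Finset.mem_image.1 hy
        exact hbij.1 (hVsub i ha)
      rw [h1, h2]
      refine ⟨?_, ?_, ?_⟩
      · intro a ha
        simp only [Finset.coe_image]
        exact Set.mem_image_of_mem φ ha
      · exact hbij.2.1.mono (by intro a ha; exact hVsub i ha)
      · intro y hy
        simp only [Finset.coe_image, Set.mem_image, Finset.mem_coe] at hy ⊢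
        exact hy
    · intro a ha b hb
      simp only [FGraph.induce_verts, Finset.mem_inter] at ha hb
      simp only [FGraph.induce]
      constructor
      · rintro ⟨hadj', haV, hbV⟩
        exact ⟨(hadj a ha.1 b hb.1).1 hadj', Finset.mem_image_of_mem φ haV,
          Finset.mem_image_of_mem φ hbV⟩
      · rintro ⟨hadj', -, -⟩
        exact ⟨(hadj a ha.1 b hb.1).2 hadj', ha.2, hb.2⟩

theorem prodProp_induce {n : ℕ} {Qs : Fin n → Set FGraph}
    (hher : ∀ i, IndHer (Qs i)) {G : FGraph} (hG : G ∈ ProdProp Qs)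
    (U : Finset ℕ) : G.induce U ∈ ProdProp Qs := by
  obtain ⟨V, hVd, hVu, hVm⟩ := hG
  refine ⟨fun i => V i ∩ U, ?_, ?_, ?_⟩
  · intro i j hij
    exact (hVd i j hij).mono Finset.inter_subset_left Finset.inter_subset_left
  · ext x
    simp only [Finset.mem_biUnion, Finset.mem_univ, true_and, Finset.mem_inter,
      FGraph.induce_verts]
    rw [← hVu]
    simp only [Finset.mem_biUnion, Finset.mem_univ, true_and]
    tauto
  · intro i
    have : (G.induce U).induce (V i ∩ U) = (G.induce (V i)).induce U := by
      rw [FGraph.induce_induce, FGraph.induce_induce]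
      congr 1
      ext x
      simp only [Finset.mem_inter]
      tauto
    rw [this]
    exact induce_mem (hher i) (hVm i) U

theorem FGraph.iso_symm {G H : FGraph} (h : G.Iso H) : H.Iso G := by
  obtain ⟨φ, hbij, hadj⟩ := h
  classical
  set ψ := Function.invFunOn φ ↑G.verts with hψ
  have hinv : Set.InvOn ψ φ ↑G.verts ↑H.verts := hbij.invOn_invFunOn
  have hψbij : Set.BijOn ψ ↑H.verts ↑G.verts := hbij.symm hinv.symm
  refine ⟨ψ, hψbij, ?_⟩
  intro a ha b hb
  have ha' : ψ a ∈ G.verts := hψbij.mapsTo ha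
  have hb' : ψ b ∈ G.verts := hψbij.mapsTo hb
  have h1 := hadj (ψ a) ha' (ψ b) hb'
  rw [hinv.2 ha, hinv.2 hb] at h1
  exact h1.symm

theorem prodProp_indHer {n : ℕ} {Qs : Fin n → Set FGraph}
    (hprop : ∀ i, IsProperty (Qs i)) (hher : ∀ i, IndHer (Qs i)) :
    IndHer (ProdProp Qs) := by
  rintro G H hG ⟨U, hU, hiso⟩
  have h1 : G.induce U ∈ ProdProp Qs := prodProp_induce hher hG U
  exact prodProp_iso_closed hprop (G.induce U) H (FGraph.iso_symm hiso) h1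

theorem prodProp_additive {n : ℕ} {Qs : Fin n → Set FGraph}
    (hadd : ∀ i, Additive' (Qs i)) : Additive' (ProdProp Qs) := by
  rintro G H K ⟨V, hVd, hVu, hVm⟩ ⟨W, hWd, hWu, hWm⟩ ⟨hKd, hKu, hKa⟩
  have hVsub : ∀ i, V i ⊆ G.verts := part_subset ⟨hVd, hVu, hVm⟩
  have hWsub : ∀ i, W i ⊆ H.verts := part_subset ⟨hWd, hWu, hWm⟩
  have hGH : Disjoint G.verts H.verts := by
    have := hKd 0 1 (by simp)
    simpa using this
  have hKverts : K.verts = G.verts ∪ H.verts := by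
    rw [hKu, biUnion_fin_two]; simp
  have hKadj : ∀ a b, K.Adj a b ↔ (G.Adj a b ∨ H.Adj a b) := by
    intro a b
    rw [hKa a b, Fin.exists_fin_two]
    simp
  refine ⟨fun i => V i ∪ W i, ?_, ?_, ?_⟩
  · intro i j hij
    rw [Finset.disjoint_left]
    rintro x hx hx'
    rcases Finset.mem_union.1 hx with h1 | h1 <;> rcases Finset.mem_union.1 hx' with h2 | h2
    · exact Finset.disjoint_left.1 (hVd i j hij) h1 h2
    · exact Finset.disjoint_left.1 hGH (hVsub i h1) (hWsub j h2)
    · exact Finset.disjoint_left.1 hGH (hVsub j h2) (hWsub i h1)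
    · exact Finset.disjoint_left.1 (hWd i j hij) h1 h2
  · ext x
    simp only [Finset.mem_biUnion, Finset.mem_univ, true_and, Finset.mem_union, hKverts]
    rw [← hVu, ← hWu]
    simp only [Finset.mem_biUnion, Finset.mem_univ, true_and]
    constructor
    · rintro ⟨i, h | h⟩
      · exact Or.inl ⟨i, h⟩
      · exact Or.inr ⟨i, h⟩
    · rintro (⟨i, h⟩ | ⟨i, h⟩)
      · exact ⟨i, Or.inl h⟩
      · exact ⟨i, Or.inr h⟩
  · intro i
    refine hadd i (G.induce (V i)) (H.induce (W i)) (K.induce (V i ∪ W i))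
      (hVm i) (hWm i) ⟨?_, ?_, ?_⟩
    · intro a b hab
      fin_cases a <;> fin_cases b
      · simp at hab
      · simp only [Matrix.cons_val_zero, Matrix.cons_val_one, Matrix.head_cons,
          FGraph.induce_verts]
        exact hGH.mono Finset.inter_subset_left Finset.inter_subset_left
      · simp only [Matrix.cons_val_zero, Matrix.cons_val_one, Matrix.head_cons,
          FGraph.induce_verts]
        exact (hGH.mono Finset.inter_subset_left Finset.inter_subset_left).symm
      · simp at hab
    · rw [biUnion_fin_two]
      simp only [Matrix.cons_val_zero, Matrix.cons_val_one, Matrix.head_cons,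
        FGraph.induce_verts]
      rw [Finset.inter_eq_right.mpr (hVsub i), Finset.inter_eq_right.mpr (hWsub i)]
      rw [hKverts]
      ext x
      simp only [Finset.mem_inter, Finset.mem_union]
      constructor
      · rintro ⟨h1 | h1, h2 | h2⟩
        · exact Or.inl h2
        · exact Or.inr h2
        · exact Or.inl h2
        · exact Or.inr h2
      · rintro (h | h)
        · exact ⟨Or.inl (hVsub i h), Or.inl h⟩
        · exact ⟨Or.inr (hWsub i h), Or.inr h⟩
    · intro a b
      rw [Fin.exists_fin_two]
      simp only [Matrix.cons_val_zero, Matrix.cons_val_one, Matrix.head_cons]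
      simp only [FGraph.induce]
      rw [hKadj]
      constructor
      · rintro ⟨hG' | hH', ha, hb⟩
        · have haG := (G.mem_of_adj a b hG').1
          have hbG := (G.mem_of_adj a b hG').2
          have ha' : a ∈ V i := by
            rcases Finset.mem_union.1 ha with h | h
            · exact h
            · exact absurd haG (Finset.disjoint_right.1 hGH (hWsub i h))
          have hb' : b ∈ V i := by
            rcases Finset.mem_union.1 hb with h | h
            · exact h
            · exact absurd hbG (Finset.disjoint_right.1 hGH (hWsub i h))
          exact Or.inl ⟨hG', ha', hb'⟩
        · have haH := (H.mem_of_adj a b hH').1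
          have hbH := (H.mem_of_adj a b hH').2
          have ha' : a ∈ W i := by
            rcases Finset.mem_union.1 ha with h | h
            · exact absurd haH (Finset.disjoint_left.1 hGH (hVsub i h))
            · exact h
          have hb' : b ∈ W i := by
            rcases Finset.mem_union.1 hb with h | h
            · exact absurd hbH (Finset.disjoint_left.1 hGH (hVsub i h))
            · exact h
          exact Or.inr ⟨hH', ha', hb'⟩
      · rintro (⟨h1, h2, h3⟩ | ⟨h1, h2, h3⟩)
        · exact ⟨Or.inl h1, Finset.mem_union_left _ h2, Finset.mem_union_left _ h3⟩
        · exact ⟨Or.inr h1, Finset.mem_union_right _ h2, Finset.mem_union_right _ h3⟩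
theorem prodProp_isAIH {m : ℕ} {Qs : Fin (m + 1) → Set FGraph}
    (h : ∀ i, IsAIH (Qs i)) : IsAIH (ProdProp Qs) := by
  refine ⟨⟨?_, ?_, prodProp_iso_closed (fun i => (h i).1)⟩,
    prodProp_indHer (fun i => (h i).1) (fun i => (h i).2.1),
    prodProp_additive (fun i => (h i).2.2)⟩
  · exact mem_prodProp_of_mem (fun i => (h i).1) (i₀ := 0) (h 0).1.1
  · obtain ⟨G₀, hG₀, hne⟩ := (h 0).1.2.1
    exact ⟨G₀, mem_prodProp_of_mem (fun i => (h i).1) (i₀ := 0) hG₀, hne⟩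

/-- Associativity: splitting off the first factor. -/
theorem prodProp_assoc {m : ℕ} (Qs : Fin (m + 2) → Set FGraph) :
    ProdProp Qs = ProdProp ![Qs 0, ProdProp (fun i : Fin (m + 1) => Qs i.succ)] := by
  ext G
  constructor
  · rintro ⟨V, hVd, hVu, hVm⟩
    have hVsub : ∀ i, V i ⊆ G.verts := part_subset ⟨hVd, hVu, hVm⟩
    set X1 : Finset ℕ := Finset.univ.biUnion (fun i : Fin (m + 1) => V i.succ) with hX1
    have hX1sub : X1 ⊆ G.verts := by
      intro x hx
      simp only [hX1, Finset.mem_biUnion, Finset.mem_univ, true_and] at hx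
      obtain ⟨i, hi⟩ := hx
      exact hVsub _ hi
    refine ⟨![V 0, X1], ?_, ?_, ?_⟩
    · intro i j hij
      fin_cases i <;> fin_cases j
      · simp at hij
      · simp only [Matrix.cons_val_zero, Matrix.cons_val_one, Matrix.head_cons]
        rw [hX1]
        exact Finset.disjoint_biUnion_right _ _ _ |>.2 fun i _ =>
          hVd 0 i.succ (Fin.succ_ne_zero i).symm
      · simp only [Matrix.cons_val_zero, Matrix.cons_val_one, Matrix.head_cons]
        rw [hX1]
        exact (Finset.disjoint_biUnion_right _ _ _ |>.2 fun i _ =>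
          hVd 0 i.succ (Fin.succ_ne_zero i).symm).symm
      · simp at hij
    · rw [biUnion_fin_two]
      simp only [Matrix.cons_val_zero, Matrix.cons_val_one, Matrix.head_cons]
      rw [← hVu]
      ext x
      simp only [Finset.mem_union, Finset.mem_biUnion, Finset.mem_univ, true_and, hX1]
      constructor
      · rintro (h | ⟨i, hi⟩)
        · exact ⟨0, h⟩
        · exact ⟨i.succ, hi⟩
      · rintro ⟨j, hj⟩
        rcases Fin.eq_zero_or_eq_succ j with rfl | ⟨i, rfl⟩
        · exact Or.inl hj
        · exact Or.inr ⟨i, hj⟩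
    · intro i
      fin_cases i
      · exact hVm 0
      · show G.induce X1 ∈ ProdProp (fun i : Fin (m + 1) => Qs i.succ)
        refine ⟨fun i => V i.succ, ?_, ?_, ?_⟩
        · intro i j hij
          exact hVd i.succ j.succ (by simpa [Fin.ext_iff] using hij)
        · simp only [FGraph.induce_verts]
          rw [Finset.inter_eq_right.mpr hX1sub]
        · intro i
          rw [FGraph.induce_eq_of_subset]
          · exact hVm i.succ
          · intro x hx
            simp only [hX1, Finset.mem_biUnion, Finset.mem_univ, true_and]
            exact ⟨i, hx⟩
  · rintro ⟨X, hXd, hXu, hXm⟩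
    have hX0 := hXm 0
    have hX1 := hXm 1
    simp only [Matrix.cons_val_zero, Matrix.cons_val_one, Matrix.head_cons] at hX0 hX1
    obtain ⟨W, hWd, hWu, hWm⟩ := hX1
    have hXsub : ∀ i, X i ⊆ G.verts := part_subset ⟨hXd, hXu, hXm⟩
    have hWsub : ∀ i, W i ⊆ X 1 := by
      intro i x hx
      have : x ∈ (G.induce (X 1)).verts := by
        rw [← hWu]
        exact Finset.mem_biUnion.2 ⟨i, Finset.mem_univ i, hx⟩
      simp only [FGraph.induce_verts, Finset.mem_inter] at this
      exact this.2
    refine ⟨Fin.cases (X 0) W, ?_, ?_, ?_⟩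
    · intro i j hij
      rcases Fin.eq_zero_or_eq_succ i with rfl | ⟨i', rfl⟩ <;>
        rcases Fin.eq_zero_or_eq_succ j with rfl | ⟨j', rfl⟩
      · simp at hij
      · simp only [Fin.cases_zero, Fin.cases_succ]
        exact (hXd 0 1 (by simp)).mono le_rfl (hWsub j')
      · simp only [Fin.cases_zero, Fin.cases_succ]
        exact ((hXd 0 1 (by simp)).mono le_rfl (hWsub i')).symm
      · simp only [Fin.cases_succ]
        exact hWd i' j' (by simpa [Fin.ext_iff] using hij)
    · rw [← hXu, biUnion_fin_two]
      ext x
      simp only [Finset.mem_biUnion, Finset.mem_univ, true_and, Finset.mem_union]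
      constructor
      · rintro ⟨j, hj⟩
        rcases Fin.eq_zero_or_eq_succ j with rfl | ⟨i, rfl⟩
        · exact Or.inl (by simpa using hj)
        · simp only [Fin.cases_succ] at hj
          exact Or.inr (hWsub i hj)
      · rintro (hx | hx)
        · exact ⟨0, by simpa using hx⟩
        · have hx' : x ∈ Finset.univ.biUnion W := by
            rw [hWu]
            simp only [FGraph.induce_verts, Finset.mem_inter]
            exact ⟨hXsub 1 hx, hx⟩
          obtain ⟨i, -, hi⟩ := Finset.mem_biUnion.1 hx'
          exact ⟨i.succ, by simpa using hi⟩
    · intro i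
      rcases Fin.eq_zero_or_eq_succ i with rfl | ⟨i', rfl⟩
      · simpa using hX0
      · simp only [Fin.cases_succ]
        have := hWm i'
        rwa [FGraph.induce_eq_of_subset G (hWsub i')] at this
theorem prodProp_comm_sub (A B : Set FGraph) :
    ProdProp ![A, B] ⊆ ProdProp ![B, A] := by
  rintro G ⟨V, hVd, hVu, hVm⟩
  refine ⟨![V 1, V 0], ?_, ?_, ?_⟩
  · intro i j hij
    fin_cases i <;> fin_cases j
    · simp at hij
    · simpa using hVd 1 0 (by simp)
    · simpa using hVd 0 1 (by simp)
    · simp at hij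
  · rw [biUnion_fin_two, ← hVu, biUnion_fin_two]
    simp [Finset.union_comm]
  · intro i
    fin_cases i
    · simpa using hVm 1
    · simpa using hVm 0

theorem prodProp_comm (A B : Set FGraph) :
    ProdProp ![A, B] = ProdProp ![B, A] :=
  le_antisymm (prodProp_comm_sub A B) (prodProp_comm_sub B A)

/-- The first part of a `(A,B)`-partition of a `(A∘B)`-strict graph is `A`-strict. -/
theorem strict_part {A B : Set FGraph} (hA : IsAIH A) (hB : IsAIH B)
    {G : FGraph} {V : Fin 2 → Finset ℕ} (hV : IsPartitionInto ![A, B] G V)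
    {v : ℕ} {Hbad : FGraph} (hvnot : v ∉ G.verts)
    (hverts : Hbad.verts = insert v G.verts)
    (hadj : ∀ a ∈ G.verts, ∀ b ∈ G.verts, (Hbad.Adj a b ↔ G.Adj a b))
    (hbad : Hbad ∉ ProdProp ![A, B]) :
    Strict A (G.induce (V 0)) := by
  obtain ⟨hVd, hVu, hVm⟩ := hV
  have hVsub : ∀ i, V i ⊆ G.verts := part_subset ⟨hVd, hVu, hVm⟩
  have hunion : V 0 ∪ V 1 = G.verts := by rw [← hVu, biUnion_fin_two]
  have hGA : G.induce (V 0) ∈ A := by simpa using hVm 0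
  have hGVerts : (G.induce (V 0)).verts = V 0 := by
    simp [Finset.inter_eq_right.mpr (hVsub 0)]
  -- key equality : G agrees with Hbad on G.verts
  have hHbadG : ∀ U : Finset ℕ, U ⊆ G.verts → Hbad.induce U = G.induce U := by
    intro U hU
    refine FGraph.adj_iff_ext ?_ ?_
    · simp only [FGraph.induce_verts, hverts]
      rw [Finset.inter_eq_right.mpr (hU.trans (Finset.subset_insert v G.verts)),
        Finset.inter_eq_right.mpr hU]
    · intro a ha b hb
      simp only [FGraph.induce_verts, Finset.mem_inter, hverts] at ha hb
      simp only [FGraph.induce]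
      rw [hadj a (hU ha.2) b (hU hb.2)]
  refine ⟨hGA, Hbad.induce (insert v (V 0)), ⟨v, ?_, ?_, ?_⟩, ?_⟩
  · rw [hGVerts]
    exact fun h => hvnot (hVsub 0 h)
  · rw [hGVerts]
    simp only [FGraph.induce_verts, hverts]
    ext x
    simp only [Finset.mem_inter, Finset.mem_insert]
    constructor
    · exact fun h => h.2
    · rintro (rfl | h)
      · exact ⟨Or.inl rfl, Or.inl rfl⟩
      · exact ⟨Or.inr (hVsub 0 h), Or.inr h⟩
  · intro a ha b hb
    rw [hGVerts] at ha hb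
    simp only [FGraph.induce]
    have haG : a ∈ G.verts := hVsub 0 ha
    have hbG : b ∈ G.verts := hVsub 0 hb
    rw [hadj a haG b hbG]
    constructor
    · rintro ⟨h1, -, -⟩; exact ⟨h1, ha, hb⟩
    · rintro ⟨h1, h2, h3⟩
      exact ⟨h1, Finset.mem_insert_of_mem ha, Finset.mem_insert_of_mem hb⟩
  · -- the extension is not in A, else Hbad ∈ A∘B
    intro hmem
    refine hbad ⟨![insert v (V 0), V 1], ?_, ?_, ?_⟩
    · intro i j hij
      fin_cases i <;> fin_cases j
      · simp at hij
      · simp only [Matrix.cons_val_zero, Matrix.cons_val_one, Matrix.head_cons]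
        rw [Finset.disjoint_left]
        intro x hx hx'
        rcases Finset.mem_insert.1 hx with rfl | hx0
        · exact hvnot (hVsub 1 hx')
        · exact Finset.disjoint_left.1 (hVd 0 1 (by simp)) hx0 hx'
      · simp only [Matrix.cons_val_zero, Matrix.cons_val_one, Matrix.head_cons]
        rw [Finset.disjoint_right]
        intro x hx hx'
        rcases Finset.mem_insert.1 hx with rfl | hx0
        · exact hvnot (hVsub 1 hx')
        · exact Finset.disjoint_left.1 (hVd 0 1 (by simp)) hx0 hx'
      · simp at hij
    · rw [biUnion_fin_two]
      simp only [Matrix.cons_val_zero, Matrix.cons_val_one, Matrix.head_cons]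
      rw [hverts, ← hunion]
      ext x
      simp only [Finset.mem_union, Finset.mem_insert]
      tauto
    · intro i
      fin_cases i
      · simpa using hmem
      · show Hbad.induce (V 1) ∈ B
        rw [hHbadG (V 1) (hVsub 1)]
        simpa using hVm 1
theorem biUnion_append {p q : ℕ} (f : Fin (p + q) → Finset ℕ) :
    Finset.univ.biUnion f =
      (Finset.univ.biUnion fun i : Fin p => f (Fin.castAdd q i)) ∪
      (Finset.univ.biUnion fun j : Fin q => f (Fin.natAdd p j)) := by
  ext x
  simp only [Finset.mem_biUnion, Finset.mem_univ, true_and, Finset.mem_union]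
  constructor
  · rintro ⟨i, hi⟩
    rcases lt_or_ge i.val p with h | h
    · refine Or.inl ⟨⟨i.val, h⟩, ?_⟩
      have : i = Fin.castAdd q ⟨i.val, h⟩ := Fin.ext rfl
      rwa [this] at hi
    · refine Or.inr ⟨⟨i.val - p, by omega⟩, ?_⟩
      have : i = Fin.natAdd p ⟨i.val - p, by omega⟩ := Fin.ext (by simp; omega)
      rwa [this] at hi
  · rintro (⟨i, hi⟩ | ⟨j, hj⟩)
    · exact ⟨Fin.castAdd q i, hi⟩
    · exact ⟨Fin.natAdd p j, hj⟩

theorem fin_split {p q : ℕ} (i : Fin (p + q)) :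
    (∃ i', i = Fin.castAdd q i') ∨ (∃ j', i = Fin.natAdd p j') := by
  rcases lt_or_ge i.val p with h | h
  · exact Or.inl ⟨⟨i.val, h⟩, Fin.ext rfl⟩
  · exact Or.inr ⟨⟨i.val - p, by omega⟩, Fin.ext (by simp; omega)⟩

theorem main_ineq {A B : Set FGraph} (hA : IsAIH A) (hB : IsAIH B)
    (hne : ProdProp ![A, B] ≠ Set.univ) :
    decOf A + decOf B ≤ decOf (ProdProp ![A, B]) := by
  have hAIH : ∀ i : Fin 2, IsAIH (![A, B] i) := by
    intro i; fin_cases i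
    · simpa using hA
    · simpa using hB
  have hPP : IsAIH (ProdProp ![A, B]) := prodProp_isAIH (m := 1) hAIH
  obtain ⟨G₀, hG₀⟩ := strict_exists hPP.1 hPP.2.1 hne
  refine le_csInf ⟨_, G₀, hG₀, rfl⟩ ?_
  rintro b ⟨G, hG, rfl⟩
  obtain ⟨hGmem, Hbad, ⟨v, hvnot, hverts, hadjHG⟩, hbadnot⟩ := hG
  obtain ⟨V, hVpart⟩ := hGmem
  have hVsub : ∀ i, V i ⊆ G.verts := part_subset hVpart
  have hunion : V 0 ∪ V 1 = G.verts := by rw [← hVpart.2.1, biUnion_fin_two]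
  have hGV0 : (G.induce (V 0)).verts = V 0 := by
    simp [Finset.inter_eq_right.mpr (hVsub 0)]
  have hGV1 : (G.induce (V 1)).verts = V 1 := by
    simp [Finset.inter_eq_right.mpr (hVsub 1)]
  have hstrictA : Strict A (G.induce (V 0)) :=
    strict_part hA hB hVpart hvnot hverts hadjHG hbadnot
  have hVswap : IsPartitionInto ![B, A] G ![V 1, V 0] := by
    obtain ⟨hVd, hVu, hVm⟩ := hVpart
    refine ⟨?_, ?_, ?_⟩
    · intro i j hij
      fin_cases i <;> fin_cases j
      · simp at hij
      · simpa using hVd 1 0 (by simp)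
      · simpa using hVd 0 1 (by simp)
      · simp at hij
    · rw [biUnion_fin_two, ← hVu, biUnion_fin_two]
      simp [Finset.union_comm]
    · intro i
      fin_cases i
      · simpa using hVm 1
      · simpa using hVm 0
  have hstrictB : Strict B (G.induce (V 1)) := by
    have := strict_part hB hA hVswap hvnot hverts hadjHG
      (by rw [← prodProp_comm]; exact hbadnot)
    simpa using this
  have hvA : (G.induce (V 0)).verts.Nonempty := strict_nonempty hA.1 hA.2.1 hstrictA
  have hvB : (G.induce (V 1)).verts.Nonempty := strict_nonempty hB.1 hB.2.1 hstrictB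
  obtain ⟨U, hU⟩ := decP_decomp hA hstrictA.1 hvA
  obtain ⟨W, hW⟩ := decP_decomp hB hstrictB.1 hvB
  have hUsub : ∀ i, U i ⊆ V 0 := by
    intro i x hx
    have : x ∈ (G.induce (V 0)).verts := by
      rw [← hU.2.2.1]; exact Finset.mem_biUnion.2 ⟨i, Finset.mem_univ i, hx⟩
    rwa [hGV0] at this
  have hWsub : ∀ j, W j ⊆ V 1 := by
    intro j x hx
    have : x ∈ (G.induce (V 1)).verts := by
      rw [← hW.2.2.1]; exact Finset.mem_biUnion.2 ⟨j, Finset.mem_univ j, hx⟩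
    rwa [hGV1] at this
  have hV01 : Disjoint (V 0) (V 1) := hVpart.1 0 1 (by simp)
  have hcomb : IsDecomp (ProdProp ![A, B]) G (Fin.append U W) := by
    refine ⟨?_, ?_, ?_, ?_⟩
    · intro i
      rcases fin_split i with ⟨i', rfl⟩ | ⟨j', rfl⟩
      · rw [Fin.append_left]; exact hU.1 i'
      · rw [Fin.append_right]; exact hW.1 j'
    · intro i j hij
      rcases fin_split i with ⟨i', rfl⟩ | ⟨i', rfl⟩ <;>
        rcases fin_split j with ⟨j', rfl⟩ | ⟨j', rfl⟩
      · rw [Fin.append_left, Fin.append_left]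
        refine hU.2.1 i' j' fun h => hij (by rw [h])
      · rw [Fin.append_left, Fin.append_right]
        exact hV01.mono (hUsub i') (hWsub j')
      · rw [Fin.append_right, Fin.append_left]
        exact (hV01.mono (hUsub j') (hWsub i')).symm
      · rw [Fin.append_right, Fin.append_right]
        refine hW.2.1 i' j' fun h => hij (by rw [h])
    · rw [biUnion_append]
      have e1 : (fun i : Fin (decP A (G.induce (V 0))) => Fin.append U W (Fin.castAdd (decP B (G.induce (V 1))) i)) = U := by
        funext i; exact Fin.append_left U W i
      have e2 : (fun j : Fin (decP B (G.induce (V 1))) => Fin.append U W (Fin.natAdd (decP A (G.induce (V 0))) j)) = W := by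
        funext j; exact Fin.append_right U W j
      rw [e1, e2, hU.2.2.1, hW.2.2.1, hGV0, hGV1, hunion]
    · intro k hk Af hcop hdisjAf H hH
      set X0 : Finset ℕ :=
        Finset.univ.biUnion (fun i : Fin (decP A (G.induce (V 0))) => (Af (Fin.castAdd (decP B (G.induce (V 1))) i)).verts) with hX0
      set X1 : Finset ℕ :=
        Finset.univ.biUnion (fun j : Fin (decP B (G.induce (V 1))) => (Af (Fin.natAdd (decP A (G.induce (V 0))) j)).verts) with hX1
      have hHverts : H.verts = X0 ∪ X1 := by
        rw [hH.1]; exact biUnion_append _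
      have hX0sub : X0 ⊆ H.verts := by rw [hHverts]; exact Finset.subset_union_left
      have hX1sub : X1 ⊆ H.verts := by rw [hHverts]; exact Finset.subset_union_right
      have hcastne : ∀ (i : Fin (decP A (G.induce (V 0)))) (j : Fin (decP B (G.induce (V 1)))),
          (Fin.castAdd (decP B (G.induce (V 1))) i : Fin ((decP A (G.induce (V 0))) + (decP B (G.induce (V 1))))) ≠ Fin.natAdd (decP A (G.induce (V 0))) j := by
        intro i j h
        have := congrArg Fin.val h
        simp at this
        omega
      have hX0mem : H.induce X0 ∈ A := by
        refine hU.2.2.2 k hk (fun i => Af (Fin.castAdd (decP B (G.induce (V 1))) i)) ?_ ?_ _ ?_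
        · intro i
          rw [FGraph.induce_eq_of_subset G (hUsub i)]
          have := hcop (Fin.castAdd (decP B (G.induce (V 1))) i)
          rwa [Fin.append_left] at this
        · intro i j hij
          refine hdisjAf _ _ fun h => hij (Fin.ext ?_)
          have := congrArg Fin.val h
          simpa using this
        · refine ⟨?_, ?_⟩
          · simp only [FGraph.induce_verts]
            rw [Finset.inter_eq_right.mpr hX0sub, hX0]
          · intro i a ha b hb
            have haX : a ∈ X0 := by
              rw [hX0]; exact Finset.mem_biUnion.2 ⟨i, Finset.mem_univ i, ha⟩
            have hbX : b ∈ X0 := by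
              rw [hX0]; exact Finset.mem_biUnion.2 ⟨i, Finset.mem_univ i, hb⟩
            simp only [FGraph.induce]
            rw [hH.2 (Fin.castAdd (decP B (G.induce (V 1))) i) a ha b hb]
            constructor
            · rintro ⟨h1, -, -⟩; exact h1
            · intro h1; exact ⟨h1, haX, hbX⟩
      have hX1mem : H.induce X1 ∈ B := by
        refine hW.2.2.2 k hk (fun j => Af (Fin.natAdd (decP A (G.induce (V 0))) j)) ?_ ?_ _ ?_
        · intro j
          rw [FGraph.induce_eq_of_subset G (hWsub j)]
          have := hcop (Fin.natAdd (decP A (G.induce (V 0))) j)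
          rwa [Fin.append_right] at this
        · intro i j hij
          refine hdisjAf _ _ fun h => hij (Fin.ext ?_)
          have := congrArg Fin.val h
          simp at this
          omega
        · refine ⟨?_, ?_⟩
          · simp only [FGraph.induce_verts]
            rw [Finset.inter_eq_right.mpr hX1sub, hX1]
          · intro j a ha b hb
            have haX : a ∈ X1 := by
              rw [hX1]; exact Finset.mem_biUnion.2 ⟨j, Finset.mem_univ j, ha⟩
            have hbX : b ∈ X1 := by
              rw [hX1]; exact Finset.mem_biUnion.2 ⟨j, Finset.mem_univ j, hb⟩
            simp only [FGraph.induce]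
            rw [hH.2 (Fin.natAdd (decP A (G.induce (V 0))) j) a ha b hb]
            constructor
            · rintro ⟨h1, -, -⟩; exact h1
            · intro h1; exact ⟨h1, haX, hbX⟩
      refine ⟨![X0, X1], ?_, ?_, ?_⟩
      · intro i j hij
        have hd : Disjoint X0 X1 := by
          rw [hX0, hX1]
          refine Finset.disjoint_biUnion_left _ _ _ |>.2 fun i _ => ?_
          refine Finset.disjoint_biUnion_right _ _ _ |>.2 fun j _ => ?_
          exact hdisjAf _ _ (hcastne i j)
        fin_cases i <;> fin_cases j
        · simp at hij
        · simpa using hd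
        · simpa using hd.symm
        · simp at hij
      · rw [biUnion_fin_two]
        simp only [Matrix.cons_val_zero, Matrix.cons_val_one, Matrix.head_cons]
        exact hHverts.symm
      · intro i
        fin_cases i
        · simpa using hX0mem
        · simpa using hX1mem
  calc decOf A + decOf B ≤ (decP A (G.induce (V 0))) + (decP B (G.induce (V 1))) :=
        add_le_add (decOf_le_decP hstrictA) (decOf_le_decP hstrictB)
    _ ≤ decP (ProdProp ![A, B]) G := le_decP hcomb
theorem aux_count : ∀ (r : ℕ) (P : Set FGraph), IsAIH P → P ≠ Set.univ →
    ∀ (Qs : Fin r → Set FGraph), (∀ i, IsAIH (Qs i)) → P = ProdProp Qs →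
    r ≤ decOf P := by
  intro r
  induction r with
  | zero => intro P _ _ _ _ _; exact Nat.zero_le _
  | succ n ih =>
    intro P hP hPne Qs hQs hPeq
    rcases n with _ | m
    · simpa using decOf_pos hP hPne
    · set B' := ProdProp (fun i : Fin (m + 1) => Qs i.succ) with hB'def
      have hassoc : P = ProdProp ![Qs 0, B'] := by rw [hPeq]; exact prodProp_assoc Qs
      have hA' : IsAIH (Qs 0) := hQs 0
      have hB' : IsAIH B' := prodProp_isAIH (fun i => hQs i.succ)
      have hprop2 : ∀ i : Fin 2, IsProperty (![Qs 0, B'] i) := by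
        intro i; fin_cases i
        · simpa using hA'.1
        · simpa using hB'.1
      have hA'ne : Qs 0 ≠ Set.univ := by
        intro h
        apply hPne
        rw [hPeq]
        refine Set.eq_univ_of_forall fun G => ?_
        exact mem_prodProp_of_mem (fun i => (hQs i).1) (i₀ := 0)
          (h ▸ Set.mem_univ G)
      have hB'ne : B' ≠ Set.univ := by
        intro h
        apply hPne
        rw [hassoc]
        refine Set.eq_univ_of_forall fun G => ?_
        refine mem_prodProp_of_mem hprop2 (i₀ := 1) ?_
        simp only [Matrix.cons_val_one, Matrix.head_cons]
        exact h ▸ Set.mem_univ G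
      have hne2 : ProdProp ![Qs 0, B'] ≠ Set.univ := by rw [← hassoc]; exact hPne
      have h1 : 1 ≤ decOf (Qs 0) := decOf_pos hA' hA'ne
      have h2 : (m + 1) ≤ decOf B' :=
        ih B' hB' hB'ne (fun i => Qs i.succ) (fun i => hQs i.succ) rfl
      have h3 := main_ineq hA' hB' hne2
      rw [hassoc]
      omega

-- STATEMENT 2
theorem statement2 (A B : Set FGraph) (hA : IsAIH A) (hB : IsAIH B)
    (hne : ProdProp ![A, B] ≠ Set.univ) :
    decOf A + decOf B ≤ decOf (ProdProp ![A, B]) ∧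
    ∀ P : Set FGraph, IsAIH P → P ≠ Set.univ →
      ∀ (r : ℕ) (Qs : Fin r → Set FGraph), (∀ i, IsAIH (Qs i)) →
        P = ProdProp Qs → r ≤ decOf P := by
  refine ⟨main_ineq hA hB hne, ?_⟩
  intro P hP hPne r Qs hQs hPeq
  exact aux_count r P hP hPne Qs hQs hPeq
end

section
/- Let P be an additive induced-hereditary graph property and let 𝒢' = {G₁, G₂, …} be a generating set for P. Then 𝒢' contains a generating set {G_{k₁}, G_{k₂}, G_{k₃}, …} ⊆ 𝒢' for P which is a chain under the induced-subgraph relation: G_{k₁} ≤ G_{k₂} ≤ G_{k₃} ≤ ⋯. -/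
/-! ### Auxiliary material for Statement 12 -/

section Aux12

open Finset

lemma FGraph.iso_trans' {G H K : FGraph} (h1 : G.Iso H) (h2 : H.Iso K) : G.Iso K := by
  obtain ⟨φ, hφb, hφa⟩ := h1
  obtain ⟨ψ, hψb, hψa⟩ := h2
  refine ⟨ψ ∘ φ, hψb.comp hφb, ?_⟩
  intro a ha b hb
  rw [hφa a ha b hb, hψa _ (hφb.mapsTo ha) _ (hφb.mapsTo hb)]
  rfl

lemma FGraph.le_refl' (G : FGraph) : G.Le G := by
  refine ⟨G.verts, subset_rfl, id, ?_, ?_⟩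
  · have hv : ((G.induce G.verts).verts : Set ℕ) = (G.verts : Set ℕ) := by
      simp [FGraph.induce]
    rw [hv]; exact Set.bijOn_id _
  · intro a ha b hb
    exact ⟨fun h => ⟨h, ha, hb⟩, fun h => h.1⟩

lemma FGraph.le_trans' {H G K : FGraph} (h1 : H.Le G) (h2 : G.Le K) : H.Le K := by
  obtain ⟨U, hU, hiso1⟩ := h1
  obtain ⟨W, hW, ψ, hψb, hψa⟩ := h2
  have hmaps : ∀ a ∈ G.verts, ψ a ∈ W := by
    intro a ha
    have := hψb.mapsTo (Finset.mem_coe.mpr ha)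
    simp [FGraph.induce] at this
    exact this.2
  refine ⟨U.image ψ, ?_, ?_⟩
  · intro x hx
    obtain ⟨u, hu, rfl⟩ := Finset.mem_image.mp hx
    have := hψb.mapsTo (Finset.mem_coe.mpr (hU hu))
    simp [FGraph.induce] at this
    exact this.1
  · refine FGraph.iso_trans' hiso1 ⟨ψ, ?_, ?_⟩
    · have h1v : ((G.induce U).verts : Set ℕ) = (U : Set ℕ) := by
        simp [FGraph.induce, Finset.inter_eq_right.mpr hU]
      have h2v : ((K.induce (U.image ψ)).verts : Set ℕ) = ψ '' (U : Set ℕ) := by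
        have hsub : U.image ψ ⊆ K.verts := by
          intro x hx
          obtain ⟨u, hu, rfl⟩ := Finset.mem_image.mp hx
          have := hψb.mapsTo (Finset.mem_coe.mpr (hU hu))
          simp [FGraph.induce] at this
          exact hW this.2
        simp [FGraph.induce, Finset.inter_eq_right.mpr hsub, Finset.coe_image]
      rw [h1v, h2v]
      exact (hψb.injOn.mono (by exact_mod_cast hU)).bijOn_image
    · intro a ha b hb
      have haU : a ∈ U := by simp [FGraph.induce] at ha; exact ha.2
      have hbU : b ∈ U := by simp [FGraph.induce] at hb; exact hb.2
      have haG : a ∈ G.verts := hU haU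
      have hbG : b ∈ G.verts := hU hbU
      have key := hψa a (Finset.mem_coe.mpr haG) b (Finset.mem_coe.mpr hbG)
      constructor
      · rintro ⟨hGab, -, -⟩
        have := key.mp hGab
        exact ⟨this.1, Finset.mem_image_of_mem ψ haU, Finset.mem_image_of_mem ψ hbU⟩
      · rintro ⟨hKab, -, -⟩
        exact ⟨key.mpr ⟨hKab, hmaps a haG, hmaps b hbG⟩, haU, hbU⟩

/-- Shift all vertices of a graph by `N`. -/
def shiftG (H : FGraph) (N : ℕ) : FGraph where
  verts := H.verts.image (· + N)
  Adj a b := ∃ a' b', H.Adj a' b' ∧ a = a' + N ∧ b = b' + N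
  symm := by rintro a b ⟨a', b', h, rfl, rfl⟩; exact ⟨b', a', H.symm _ _ h, rfl, rfl⟩
  loopless := by
    rintro a ⟨a', b', h, rfl, hb⟩
    have : a' = b' := by omega
    exact H.loopless a' (this ▸ h)
  mem_of_adj := by
    rintro a b ⟨a', b', h, rfl, rfl⟩
    exact ⟨Finset.mem_image.mpr ⟨a', (H.mem_of_adj _ _ h).1, rfl⟩,
      Finset.mem_image.mpr ⟨b', (H.mem_of_adj _ _ h).2, rfl⟩⟩

lemma shiftG_iso (H : FGraph) (N : ℕ) : H.Iso (shiftG H N) := by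
  refine ⟨(· + N), ?_, ?_⟩
  · have hv : ((shiftG H N).verts : Set ℕ) = (· + N) '' (H.verts : Set ℕ) := by
      simp [shiftG, Finset.coe_image]
    rw [hv]
    exact (Set.injOn_of_injective (fun a b h => by omega)).bijOn_image
  · intro a ha b hb
    constructor
    · intro h; exact ⟨a, b, h, rfl, rfl⟩
    · rintro ⟨a', b', h, ha', hb'⟩
      have ha2 : a + N = a' + N := ha'
      have hb3 : b + N = b' + N := hb'
      have : a' = a := by omega
      have hb2 : b' = b := by omega
      subst this; subst hb2; exact h

/-- Disjoint union on union of vertex sets. -/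
def dunionG (G H : FGraph) : FGraph where
  verts := G.verts ∪ H.verts
  Adj a b := G.Adj a b ∨ H.Adj a b
  symm := by rintro a b (h | h); exacts [Or.inl (G.symm _ _ h), Or.inr (H.symm _ _ h)]
  loopless := by rintro a (h | h); exacts [G.loopless a h, H.loopless a h]
  mem_of_adj := by
    rintro a b (h | h)
    · exact ⟨Finset.mem_union_left _ (G.mem_of_adj _ _ h).1,
        Finset.mem_union_left _ (G.mem_of_adj _ _ h).2⟩
    · exact ⟨Finset.mem_union_right _ (H.mem_of_adj _ _ h).1,
        Finset.mem_union_right _ (H.mem_of_adj _ _ h).2⟩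

lemma exists_upper {P : Set FGraph} (hP : IsAIH P) {G H : FGraph}
    (hG : G ∈ P) (hH : H ∈ P) : ∃ K ∈ P, G.Le K ∧ H.Le K := by
  set N := G.verts.sup id + 1 with hN
  set H' := shiftG H N with hH'def
  have hd : Disjoint G.verts H'.verts := by
    rw [Finset.disjoint_left]
    intro a haG haH'
    have h1 : a ≤ G.verts.sup id := Finset.le_sup (f := id) haG
    obtain ⟨a', _, rfl⟩ := Finset.mem_image.mp haH'
    omega
  have hH' : H' ∈ P := hP.1.2.2 H H' (shiftG_iso H N) hH
  set K := dunionG G H' with hKdef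
  have hdu : IsDisjUnion K ![G, H'] := by
    refine ⟨?_, ?_, ?_⟩
    · intro i j hij
      fin_cases i <;> fin_cases j <;>
        first
          | exact absurd rfl hij
          | simpa using hd
          | simpa using hd.symm
    · ext a; simp [hKdef, dunionG, Fin.exists_fin_two]
    · intro a b; simp [hKdef, dunionG, Fin.exists_fin_two]
  have hK : K ∈ P := hP.2.2 G H' K hG hH' hdu
  have hGK : G.verts ⊆ K.verts := Finset.subset_union_left
  have hH'K : H'.verts ⊆ K.verts := Finset.subset_union_right
  refine ⟨K, hK, ?_, ?_⟩
  · refine ⟨G.verts, hGK, id, ?_, ?_⟩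
    · have hv : ((K.induce G.verts).verts : Set ℕ) = (G.verts : Set ℕ) := by
        simp [FGraph.induce, Finset.inter_eq_right.mpr hGK]
      rw [hv]; exact Set.bijOn_id _
    · intro a ha b hb
      constructor
      · intro h; exact ⟨Or.inl h, ha, hb⟩
      · rintro ⟨(h | h), -, -⟩
        · exact h
        · exact absurd (H'.mem_of_adj _ _ h).1 (Finset.disjoint_left.mp hd ha)
  · refine ⟨H'.verts, hH'K, (· + N), ?_, ?_⟩
    · have h1 : (K.induce H'.verts).verts = H'.verts := Finset.inter_eq_right.mpr hH'K
      have hv : ((K.induce H'.verts).verts : Set ℕ) = (· + N) '' (H.verts : Set ℕ) := by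
        rw [h1, hH'def]
        exact Finset.coe_image
      rw [hv]
      exact (Set.injOn_of_injective (fun a b h => by omega)).bijOn_image
    · intro a ha b hb
      have haH' : a + N ∈ H'.verts := Finset.mem_image_of_mem _ ha
      have hbH' : b + N ∈ H'.verts := Finset.mem_image_of_mem _ hb
      constructor
      · intro h; exact ⟨Or.inr ⟨a, b, h, rfl, rfl⟩, haH', hbH'⟩
      · rintro ⟨(h | h), -, -⟩
        · have hm : a + N ∈ G.verts := (G.mem_of_adj _ _ h).1
          exact absurd haH' (Finset.disjoint_left.mp hd hm)
        · obtain ⟨a', b', h', ha', hb'⟩ := h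
          have ha2 : a + N = a' + N := ha'
          have hb3 : b + N = b' + N := hb'
          have h1 : a' = a := by omega
          have h2 : b' = b := by omega
          subst h1; subst h2; exact h'

open Classical in
noncomputable def encodeGraph (G : FGraph) : Finset ℕ × Finset (ℕ × ℕ) :=
  (G.verts, (G.verts ×ˢ G.verts).filter fun p => G.Adj p.1 p.2)

lemma FGraph.ext'_s12 {G H : FGraph} (hv : G.verts = H.verts) (ha : G.Adj = H.Adj) : G = H := by
  cases G; cases H; cases hv; cases ha; rfl

lemma encodeGraph_inj : Function.Injective encodeGraph := by
  classical
  intro G H h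
  have hv : G.verts = H.verts := congrArg Prod.fst h
  have he := congrArg Prod.snd h
  refine FGraph.ext'_s12 hv ?_
  funext a b
  apply propext
  constructor
  · intro hab
    have hm : (a, b) ∈ (G.verts ×ˢ G.verts).filter fun p => G.Adj p.1 p.2 := by
      refine Finset.mem_filter.mpr ⟨Finset.mem_product.mpr ?_, hab⟩
      exact ⟨(G.mem_of_adj _ _ hab).1, (G.mem_of_adj _ _ hab).2⟩
    have : (a, b) ∈ (H.verts ×ˢ H.verts).filter fun p => H.Adj p.1 p.2 := by
      simp only [encodeGraph] at he
      rw [← he]; exact hm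
    exact (Finset.mem_filter.mp this).2
  · intro hab
    have hm : (a, b) ∈ (H.verts ×ˢ H.verts).filter fun p => H.Adj p.1 p.2 := by
      refine Finset.mem_filter.mpr ⟨Finset.mem_product.mpr ?_, hab⟩
      exact ⟨(H.mem_of_adj _ _ hab).1, (H.mem_of_adj _ _ hab).2⟩
    have : (a, b) ∈ (G.verts ×ˢ G.verts).filter fun p => G.Adj p.1 p.2 := by
      simp only [encodeGraph] at he
      rw [he]; exact hm
    exact (Finset.mem_filter.mp this).2

instance : Countable FGraph := encodeGraph_inj.countable

end Aux12

-- STATEMENT 12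
theorem statement12 (P : Set FGraph) (hP : IsAIH P)
    (𝒢' : Set FGraph) (hgen : Generates 𝒢' P) :
    ∃ f : ℕ → FGraph, (∀ t, f t ∈ 𝒢') ∧ (∀ t, FGraph.Le (f t) (f (t + 1))) ∧
      Generates (Set.range f) P := by
  have hgen' : gen 𝒢' = P := hgen
  have hsubP : ∀ H ∈ 𝒢', H ∈ P := by
    intro H hH
    rw [← hgen']
    exact ⟨H, hH, FGraph.le_refl' H⟩
  have hPG : ∀ G ∈ P, ∃ H ∈ 𝒢', G.Le H := by
    intro G hGp
    rw [← hgen'] at hGp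
    exact hGp
  have hPc : P.Countable := Set.to_countable P
  obtain ⟨g, hg⟩ := hPc.exists_eq_range ⟨nullGraph, hP.1.1⟩
  have hgP : ∀ t, g t ∈ P := by intro t; rw [hg]; exact ⟨t, rfl⟩
  obtain ⟨G0, hG0, -⟩ := hPG nullGraph hP.1.1
  have hstep : ∀ t : ℕ, ∀ G, G ∈ 𝒢' → ∃ H, H ∈ 𝒢' ∧ G.Le H ∧ (g t).Le H := by
    intro t G hGmem
    obtain ⟨K, hK, hGK, hgtK⟩ := exists_upper hP (hsubP G hGmem) (hgP t)
    obtain ⟨H, hH, hKH⟩ := hPG K hK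
    exact ⟨H, hH, FGraph.le_trans' hGK hKH, FGraph.le_trans' hgtK hKH⟩
  choose! step h1 h2 h3 using hstep
  set f : ℕ → FGraph := fun n => Nat.rec (motive := fun _ => FGraph) G0
    (fun t prev => step t prev) n with hf
  have hmem : ∀ t, f t ∈ 𝒢' := by
    intro t
    induction t with
    | zero => exact hG0
    | succ t ih => exact h1 t (f t) ih
  have hchain : ∀ t, (f t).Le (f (t + 1)) := fun t => h2 t (f t) (hmem t)
  have hgle : ∀ t, (g t).Le (f (t + 1)) := fun t => h3 t (f t) (hmem t)
  refine ⟨f, hmem, hchain, ?_⟩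
  show gen (Set.range f) = P
  ext G
  constructor
  · rintro ⟨H, ⟨t, rfl⟩, hle⟩
    exact hP.2.1 (f t) G (hsubP _ (hmem t)) hle
  · intro hGp
    have : G ∈ Set.range g := by rw [← hg]; exact hGp
    obtain ⟨t, rfl⟩ := this
    exact ⟨f (t + 1), ⟨t + 1, rfl⟩, hgle t⟩
end
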